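/- Let A : dom(A) ⊆ H → H be an invertible self-adjoint operator on a Hilbert space H. For x ∈ H¹(S¹, H) ∩ L²(S¹, dom(A)) satisfying (d/dt + A)x = y with y ∈ L²(S¹, H), the estimate ‖dx/dt‖_{L²(S¹,H)} ≤ C‖y‖_{L²(S¹,H)} holds with a constant C depending only on A. -/

import Mathlib

open Filter intervalIntegral

/-- Let `A : dom A ⊆ H → H` be an invertible self-adjoint operator on a
Hilbert space `H`.  For `x ∈ H¹(S¹, H) ∩ L²(S¹, dom A)` (here realized as a `2π`-periodic
differentiable path `x` with values in `dom A` and continuous derivative `x'`) satisfying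
`(d/dt + A) x = y`, the estimate `‖dx/dt‖_{L²(S¹,H)} ≤ C ‖y‖_{L²(S¹,H)}` holds with a
constant `C` depending only on `A`. -/
theorem stmt_8 {H : Type*} [NormedAddCommGroup H] [InnerProductSpace ℂ H] [CompleteSpace H]
    (A : H →ₗ.[ℂ] H) (hdense : Dense (A.domain : Set H)) (hsa : A.adjoint = A)
    (hinv : ∃ R : H →L[ℂ] H,
      (∀ x (hx : x ∈ A.domain), R (A ⟨x, hx⟩) = x) ∧
      (∀ y : H, ∃ hy : R y ∈ A.domain, A ⟨R y, hy⟩ = y)) :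
    ∃ C : ℝ, 0 < C ∧ ∀ (x x' y : ℝ → H) (hx : ∀ t, x t ∈ A.domain),
      Continuous x' → Continuous y →
      (∀ t, x (t + 2 * Real.pi) = x t) →
      (∀ t, HasDerivAt x (x' t) t) →
      (∀ t, x' t + A ⟨x t, hx t⟩ = y t) →
      (∫ t in (0:ℝ)..(2 * Real.pi), ‖x' t‖ ^ 2) ≤
        C * ∫ t in (0:ℝ)..(2 * Real.pi), ‖y t‖ ^ 2 := by
  refine ⟨1, one_pos, ?_⟩
  intro x x' y hx hx'c hyc hper hderiv heq
  -- symmetry of A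
  have hsym : ∀ (u v : A.domain), (inner ℂ (A u) (v : H) : ℂ) = inner ℂ (u : H) (A v) := by
    have h := A.adjoint_isFormalAdjoint hdense
    rw [hsa] at h
    exact h
  set g : ℝ → H := fun t => y t - x' t with hg
  have hgA : ∀ t, g t = A ⟨x t, hx t⟩ := by
    intro t; rw [hg]; simp [← heq t]
  have hgc : Continuous g := hyc.sub hx'c
  have hxc : Continuous x := by
    rw [continuous_iff_continuousAt]
    exact fun t => (hderiv t).continuousAt
  -- the function φ(t) = ⟪g t, x t⟫ and its derivative
  set φ : ℝ → ℂ := fun t => inner ℂ (g t) (x t) with hφ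
  have hφd : ∀ t, HasDerivAt φ (inner ℂ (g t) (x' t) + inner ℂ (x' t) (g t)) t := by
    intro t
    rw [hasDerivAt_iff_tendsto_slope]
    have key : ∀ s : ℝ, slope φ t s
        = inner ℂ (g s) (slope x t s) + inner ℂ (slope x t s) (g t) := by
      intro s
      have hdiff : φ s - φ t = inner ℂ (g s) (x s - x t) + inner ℂ (x s - x t) (g t) := by
        have h1 : (inner ℂ (g s - g t) (x t) : ℂ) = inner ℂ (x s - x t) (g t) := by
          have hsub : g s - g t = A (⟨x s, hx s⟩ - ⟨x t, hx t⟩) := by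
            rw [LinearPMap.map_sub, ← hgA s, ← hgA t]
          rw [hsub, hgA t]
          have := hsym (⟨x s, hx s⟩ - ⟨x t, hx t⟩) ⟨x t, hx t⟩
          simpa using this
        calc φ s - φ t = inner ℂ (g s) (x s - x t) + (inner ℂ (g s - g t) (x t) : ℂ) := by
              simp only [hφ, inner_sub_right, inner_sub_left]; ring
          _ = inner ℂ (g s) (x s - x t) + inner ℂ (x s - x t) (g t) := by rw [h1]
      simp only [slope, vsub_eq_sub]
      rw [hdiff, smul_add, RCLike.real_smul_eq_coe_smul (K := ℂ) ((s - t)⁻¹) (x s - x t),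
        inner_smul_right, inner_smul_left, RCLike.conj_ofReal]
      simp only [Complex.real_smul]
      norm_cast
    have hx'lim : Tendsto (slope x t) (nhdsWithin t {t}ᶜ) (nhds (x' t)) :=
      hasDerivAt_iff_tendsto_slope.mp (hderiv t)
    have hglim : Tendsto g (nhdsWithin t {t}ᶜ) (nhds (g t)) :=
      (hgc.tendsto t).mono_left nhdsWithin_le_nhds
    have t1 : Tendsto (fun s => (inner ℂ (g s) (slope x t s) : ℂ)) (nhdsWithin t {t}ᶜ)
        (nhds (inner ℂ (g t) (x' t))) := hglim.inner hx'lim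
    have t2 : Tendsto (fun s => (inner ℂ (slope x t s) (g t) : ℂ)) (nhdsWithin t {t}ᶜ)
        (nhds (inner ℂ (x' t) (g t))) := hx'lim.inner tendsto_const_nhds
    simpa only [← key] using t1.add t2
  -- real part
  set F : ℝ → ℝ := fun t => Complex.re (φ t) with hF
  set f : ℝ → ℝ := fun t => 2 * Complex.re (inner ℂ (x' t) (g t) : ℂ) with hf
  have hFd : ∀ t, HasDerivAt F (f t) t := by
    intro t
    have := (Complex.reCLM.hasFDerivAt).comp_hasDerivAt t (hφd t)
    refine this.congr_deriv ?_
    have h2 : (inner ℂ (g t) (x' t) : ℂ).re = (inner ℂ (x' t) (g t) : ℂ).re := by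
      rw [← inner_conj_symm (x' t) (g t), Complex.conj_re]
    simp only [hf, Complex.reCLM_apply, Complex.add_re, h2]
    ring
  have hfc : Continuous f := by
    apply continuous_const.mul
    exact Complex.continuous_re.comp (hx'c.inner hgc)
  -- periodicity of x'
  have hx'per : ∀ t, x' (t + 2 * Real.pi) = x' t := by
    intro t
    have hh : HasDerivAt (fun s : ℝ => s + 2 * Real.pi) 1 t := by
      simpa using (hasDerivAt_id t).add_const (2 * Real.pi)
    have h1 := (hderiv (t + 2 * Real.pi)).scomp t hh
    simp only [one_smul] at h1
    have h2 : (x ∘ fun s : ℝ => s + 2 * Real.pi) = x := funext hper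
    rw [h2] at h1
    exact h1.unique (hderiv t)
  have hxper : x (2 * Real.pi) = x 0 := by simpa using hper 0
  have hgper : g (2 * Real.pi) = g 0 := by
    rw [hgA, hgA]
    congr 1
    exact Subtype.ext hxper
  have hFper : F (2 * Real.pi) = F 0 := by
    simp only [hF, hφ, hgper, hxper]
  -- integral of cross term is zero
  have hcross : (∫ t in (0:ℝ)..(2 * Real.pi), f t) = 0 := by
    rw [intervalIntegral.integral_eq_sub_of_hasDerivAt (fun t _ => hFd t)
      (hfc.intervalIntegrable _ _), hFper, sub_self]
  -- expand the norm
  have hexp : ∀ t, ‖y t‖ ^ 2 = ‖x' t‖ ^ 2 + f t + ‖g t‖ ^ 2 := by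
    intro t
    have h0 : y t = x' t + g t := by
      simp only [hg]
      abel
    rw [h0, @norm_add_sq ℂ]
    simp only [hf, RCLike.re_to_complex]
  have hint1 : IntervalIntegrable (fun t => ‖x' t‖ ^ 2) MeasureTheory.volume 0 (2 * Real.pi) :=
    ((hx'c.norm.pow 2)).intervalIntegrable _ _
  have hint2 : IntervalIntegrable f MeasureTheory.volume 0 (2 * Real.pi) :=
    hfc.intervalIntegrable _ _
  have hint3 : IntervalIntegrable (fun t => ‖g t‖ ^ 2) MeasureTheory.volume 0 (2 * Real.pi) :=
    ((hgc.norm.pow 2)).intervalIntegrable _ _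
  have hsplit : (∫ t in (0:ℝ)..(2 * Real.pi), ‖y t‖ ^ 2)
      = (∫ t in (0:ℝ)..(2 * Real.pi), ‖x' t‖ ^ 2) + (∫ t in (0:ℝ)..(2 * Real.pi), f t)
        + ∫ t in (0:ℝ)..(2 * Real.pi), ‖g t‖ ^ 2 := by
    rw [← intervalIntegral.integral_add hint1 hint2,
      ← intervalIntegral.integral_add (hint1.add hint2) hint3]
    exact intervalIntegral.integral_congr fun t _ => hexp t
  have hgnonneg : 0 ≤ ∫ t in (0:ℝ)..(2 * Real.pi), ‖g t‖ ^ 2 :=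
    intervalIntegral.integral_nonneg (by positivity) (fun t _ => by positivity)
  rw [one_mul, hsplit, hcross]
  linarith
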